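/- arXiv:1107.0923 — 3 statements merged into one kernel-verified Lean document; each statement's English description precedes it below -/
import Mathlib

section
/- Let O be a discrete valuation ring with uniformizer ϖ and field of fractions E, and let A be a commutative Noetherian local O-algebra with maximal ideal m. Let π₁ and π₂ be A-modules which, as O-modules, are torsion-free and ϖ-adically separated, and let f : π₁ → π₂ be an A-linear map. Assume: (1) the induced map π₁ ⊗_O E → π₂ ⊗_O E is surjective; (2) the induced map (π₁/ϖπ₁)[m] → (π₂/ϖπ₂)[m] is injective; (3) every element of (ker f)/ϖ(ker f) and every element of (coker f)[ϖ] is annihilated by some power of m. Then f is an isomorphism. -/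
set_option linter.unusedSectionVars false

section aux
variable {O : Type*} [CommRing O] [IsDomain O] [IsDiscreteValuationRing O]
    (E : Type*) [Field E] [Algebra O E] [IsFractionRing O E]
    {M : Type*} [AddCommGroup M] [Module O M]

lemma aux_pow_tf {ϖ : O} (htf : ∀ x : M, ϖ • x = 0 → x = 0) :
    ∀ (n : ℕ) (x : M), ϖ ^ n • x = 0 → x = 0 := by
  intro n
  induction n with
  | zero => intro x hx; simpa using hx
  | succ n ih =>
    intro x hx
    rw [pow_succ, mul_smul] at hx
    exact htf x (ih _ hx)

/-- kernel of `M → E ⊗ M` is trivial for torsion-free `M` -/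
lemma aux_tmul_eq_zero {ϖ : O} (hϖ : Irreducible ϖ)
    (htf : ∀ x : M, ϖ • x = 0 → x = 0) (z : M)
    (h : (1 : E) ⊗ₜ[O] z = 0) : z = 0 := by
  have hbc : IsBaseChange E (TensorProduct.mk O E M 1) := TensorProduct.isBaseChange O M E
  have : IsLocalizedModule (nonZeroDivisors O) (TensorProduct.mk O E M 1) :=
    (isLocalizedModule_iff_isBaseChange (nonZeroDivisors O) E _).mpr hbc
  have h0 : (TensorProduct.mk O E M 1) z = 0 := by
    simpa [TensorProduct.mk_apply] using h
  obtain ⟨s, hs⟩ := (IsLocalizedModule.eq_zero_iff (nonZeroDivisors O)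
    (TensorProduct.mk O E M 1)).mp h0
  have hsne : (s : O) ≠ 0 := nonZeroDivisors.coe_ne_zero s
  obtain ⟨n, u, hu⟩ := IsDiscreteValuationRing.eq_unit_mul_pow_irreducible hsne hϖ
  have h1 : ((u : O) * ϖ ^ n) • z = 0 := by rw [← hu]; exact hs
  rw [mul_smul] at h1
  have h2 : ϖ ^ n • z = 0 := by
    have := congrArg (fun w => ((u⁻¹ : Oˣ) : O) • w) h1
    simpa [← mul_smul] using this
  exact aux_pow_tf htf n z h2

/-- clearing denominators in `E ⊗ M` -/
lemma aux_clear_denom {ϖ : O} (hϖ : Irreducible ϖ) (t : TensorProduct O E M) :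
    ∃ (n : ℕ) (x : M), (ϖ ^ n : O) • t = (1 : E) ⊗ₜ[O] x := by
  have key : ∀ e : E, ∃ (n : ℕ) (c : O), (ϖ ^ n : O) • e = algebraMap O E c := by
    intro e
    obtain ⟨a, b, hb, hab⟩ := IsFractionRing.div_surjective (A := O) e
    have hbne : b ≠ 0 := nonZeroDivisors.ne_zero hb
    obtain ⟨n, u, hu⟩ := IsDiscreteValuationRing.eq_unit_mul_pow_irreducible hbne hϖ
    have hbE : algebraMap O E b ≠ 0 :=
      IsFractionRing.to_map_ne_zero_of_mem_nonZeroDivisors hb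
    refine ⟨n, ((u⁻¹ : Oˣ) : O) * a, ?_⟩
    rw [Algebra.smul_def, ← hab, ← mul_div_assoc, div_eq_iff hbE, ← map_mul, ← map_mul]
    congr 1
    rw [hu, show ((u⁻¹ : Oˣ) : O) * a * ((u : O) * ϖ ^ n) =
      (((u⁻¹ : Oˣ) : O) * (u : O)) * (a * ϖ ^ n) by ring, Units.inv_mul, one_mul, mul_comm]
  induction t using TensorProduct.induction_on with
  | zero => exact ⟨0, 0, by simp⟩
  | tmul e x =>
    obtain ⟨n, c, hc⟩ := key e
    refine ⟨n, c • x, ?_⟩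
    rw [TensorProduct.smul_tmul', hc, ← TensorProduct.smul_tmul, Algebra.smul_def, mul_one]
  | add t₁ t₂ ih₁ ih₂ =>
    obtain ⟨n₁, x₁, h₁⟩ := ih₁
    obtain ⟨n₂, x₂, h₂⟩ := ih₂
    refine ⟨n₁ + n₂, ϖ ^ n₂ • x₁ + ϖ ^ n₁ • x₂, ?_⟩
    have e₁ : (ϖ ^ (n₁ + n₂) : O) • t₁ = (1 : E) ⊗ₜ[O] (ϖ ^ n₂ • x₁) := by
      rw [pow_add, mul_comm, mul_smul, h₁, TensorProduct.tmul_smul]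
    have e₂ : (ϖ ^ (n₁ + n₂) : O) • t₂ = (1 : E) ⊗ₜ[O] (ϖ ^ n₁ • x₂) := by
      rw [pow_add, mul_smul, h₂, TensorProduct.tmul_smul]
    rw [smul_add, e₁, e₂, ← TensorProduct.tmul_add]

end aux

/-- The key lemma: let `O` be a DVR with uniformizer `ϖ` and fraction field `E`, `A` a
commutative Noetherian local `O`-algebra with maximal ideal `m`, and `f : π₁ → π₂` an
`A`-linear map of modules which are `O`-torsion-free and `ϖ`-adically separated.
If (1) the induced map `π₁ ⊗_O E → π₂ ⊗_O E` is surjective, (2) the induced map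
`(π₁/ϖπ₁)[m] → (π₂/ϖπ₂)[m]` is injective, and (3) every element of
`(ker f)/ϖ(ker f)` and of `(coker f)[ϖ]` is annihilated by some power of `m`,
then `f` is an isomorphism. -/
theorem statement0 {O : Type*} [CommRing O] [IsDomain O] [IsDiscreteValuationRing O]
    (ϖ : O) (hϖ : Irreducible ϖ)
    (E : Type*) [Field E] [Algebra O E] [IsFractionRing O E]
    {A : Type*} [CommRing A] [IsNoetherianRing A] [Algebra O A] [IsLocalRing A]
    {π₁ π₂ : Type*}
    [AddCommGroup π₁] [Module O π₁] [Module A π₁] [IsScalarTower O A π₁]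
    [AddCommGroup π₂] [Module O π₂] [Module A π₂] [IsScalarTower O A π₂]
    (f : π₁ →ₗ[A] π₂)
    -- `π₁` and `π₂` are `O`-torsion-free
    (htf₁ : ∀ x : π₁, ϖ • x = 0 → x = 0)
    (htf₂ : ∀ y : π₂, ϖ • y = 0 → y = 0)
    -- `π₁` and `π₂` are `ϖ`-adically separated
    (hsep₁ : ∀ x : π₁, (∀ n : ℕ, 1 ≤ n → ∃ y : π₁, x = ϖ ^ n • y) → x = 0)
    (hsep₂ : ∀ x : π₂, (∀ n : ℕ, 1 ≤ n → ∃ y : π₂, x = ϖ ^ n • y) → x = 0)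
    -- (1) the induced map `π₁ ⊗_O E → π₂ ⊗_O E` is surjective
    (hE : Function.Surjective ((f.restrictScalars O).baseChange E))
    -- (2) the induced map `(π₁/ϖπ₁)[m] → (π₂/ϖπ₂)[m]` is injective
    (hmtors : ∀ x : π₁, (∀ a ∈ IsLocalRing.maximalIdeal A, ∃ y : π₁, a • x = ϖ • y) →
      (∃ y : π₂, f x = ϖ • y) → ∃ y : π₁, x = ϖ • y)
    -- (3a) every element of `(ker f)/ϖ(ker f)` is annihilated by some power of `m`
    (hker : ∀ x : π₁, f x = 0 →
      ∃ n : ℕ, ∀ a ∈ (IsLocalRing.maximalIdeal A) ^ n,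
        ∃ z : π₁, f z = 0 ∧ a • x = ϖ • z)
    -- (3b) every element of `(coker f)[ϖ]` is annihilated by some power of `m`
    (hcoker : ∀ y : π₂, (∃ x : π₁, f x = ϖ • y) →
      ∃ n : ℕ, ∀ a ∈ (IsLocalRing.maximalIdeal A) ^ n, ∃ x : π₁, f x = a • y) :
    Function.Bijective f := by
  -- f commutes with O-scalars
  have hfs : ∀ (c : O) (x : π₁), f (c • x) = c • f x := fun c x =>
    f.map_smul_of_tower c x
  -- commuting O- and A-scalars
  have hcomm₁ : ∀ (c : O) (a : A) (x : π₁), a • c • x = c • a • x := by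
    intro c a x
    rw [← algebraMap_smul A c x, ← algebraMap_smul A c (a • x), smul_comm]
  have hcomm₂ : ∀ (c : O) (a : A) (y : π₂), a • c • y = c • a • y := by
    intro c a y
    rw [← algebraMap_smul A c y, ← algebraMap_smul A c (a • y), smul_comm]
  -- Step 1: injectivity
  have auxA : ∀ n : ℕ, ∀ x : π₁, f x = 0 →
      (∀ a ∈ (IsLocalRing.maximalIdeal A) ^ n, ∃ z : π₁, f z = 0 ∧ a • x = ϖ • z) →
      ∃ z : π₁, f z = 0 ∧ x = ϖ • z := by
    intro n
    induction n with
    | zero =>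
      intro x hx h
      obtain ⟨z, hz, hz'⟩ := h 1 (by simp)
      exact ⟨z, hz, by simpa using hz'⟩
    | succ n ih =>
      intro x hx h
      by_cases hall : ∀ a ∈ (IsLocalRing.maximalIdeal A) ^ n,
          ∃ z : π₁, f z = 0 ∧ a • x = ϖ • z
      · exact ih x hx hall
      · exfalso
        push_neg at hall
        obtain ⟨a, ha, hno⟩ := hall
        have hcond : ∀ b ∈ IsLocalRing.maximalIdeal A, ∃ y : π₁, b • (a • x) = ϖ • y := by
          intro b hb
          obtain ⟨z, _, hz'⟩ := h (a * b) (by rw [pow_succ]; exact Ideal.mul_mem_mul ha hb)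
          refine ⟨z, ?_⟩
          rw [← mul_smul, mul_comm, hz']
        have hf' : ∃ y : π₂, f (a • x) = ϖ • y :=
          ⟨0, by rw [map_smul, hx, smul_zero, smul_zero]⟩
        obtain ⟨y, hy⟩ := hmtors (a • x) hcond hf'
        have hfy : f y = 0 := by
          apply htf₂
          rw [← hfs, ← hy, map_smul, hx, smul_zero]
        exact hno y hfy hy
  have claimA : ∀ x : π₁, f x = 0 → ∃ z : π₁, f z = 0 ∧ x = ϖ • z := by
    intro x hx
    obtain ⟨n, hn⟩ := hker x hx
    exact auxA n x hx hn
  have chain : ∀ (n : ℕ) (x : π₁), f x = 0 → ∃ y : π₁, f y = 0 ∧ x = ϖ ^ n • y := by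
    intro n
    induction n with
    | zero => intro x hx; exact ⟨x, hx, by simp⟩
    | succ n ih =>
      intro x hx
      obtain ⟨y, hy, hxy⟩ := ih x hx
      obtain ⟨z, hz, hyz⟩ := claimA y hy
      exact ⟨z, hz, by rw [hxy, hyz, pow_succ, mul_smul]⟩
  have hker0 : ∀ x : π₁, f x = 0 → x = 0 := by
    intro x hx
    apply hsep₁
    intro n _
    obtain ⟨y, _, hxy⟩ := chain n x hx
    exact ⟨y, hxy⟩
  have hinj : Function.Injective f := by
    intro x₁ x₂ hx
    have : f (x₁ - x₂) = 0 := by rw [map_sub, hx, sub_self]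
    have := hker0 _ this
    exact sub_eq_zero.mp this
  refine ⟨hinj, ?_⟩
  -- Step 2: surjectivity
  have hBsur : ∀ y : π₂, ∃ (N : ℕ) (x : π₁), f x = ϖ ^ N • y := by
    intro y
    obtain ⟨t, ht⟩ := hE ((1 : E) ⊗ₜ[O] y)
    obtain ⟨N, x, hx⟩ := aux_clear_denom E hϖ t
    refine ⟨N, x, ?_⟩
    have h1 : ((f.restrictScalars O).baseChange E) ((ϖ ^ N : O) • t)
        = (ϖ ^ N : O) • ((1 : E) ⊗ₜ[O] y) := by
      rw [LinearMap.map_smul_of_tower, ht]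
    rw [hx] at h1
    have h2 : (1 : E) ⊗ₜ[O] (f x) = (1 : E) ⊗ₜ[O] (ϖ ^ N • y) := by
      simpa [TensorProduct.tmul_smul] using h1
    have h3 : (1 : E) ⊗ₜ[O] (f x - ϖ ^ N • y) = 0 := by
      rw [TensorProduct.tmul_sub, h2, sub_self]
    have := aux_tmul_eq_zero E hϖ htf₂ _ h3
    exact sub_eq_zero.mp this
  have auxD : ∀ n : ℕ, ∀ y : π₂, (∃ x : π₁, f x = ϖ • y) →
      (∀ a ∈ (IsLocalRing.maximalIdeal A) ^ n, ∃ x : π₁, f x = a • y) →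
      ∃ x : π₁, f x = y := by
    intro n
    induction n with
    | zero =>
      intro y _ h
      obtain ⟨x, hx⟩ := h 1 (by simp)
      exact ⟨x, by simpa using hx⟩
    | succ n ih =>
      intro y hϖy h
      by_cases hall : ∀ a ∈ (IsLocalRing.maximalIdeal A) ^ n, ∃ x : π₁, f x = a • y
      · exact ih y hϖy hall
      · exfalso
        push_neg at hall
        obtain ⟨a, ha, hno⟩ := hall
        obtain ⟨x₀, hx₀⟩ := hϖy
        have hfx' : f (a • x₀) = ϖ • (a • y) := by
          rw [map_smul, hx₀, hcomm₂]
        have hcond : ∀ b ∈ IsLocalRing.maximalIdeal A, ∃ z : π₁, b • (a • x₀) = ϖ • z := by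
          intro b hb
          obtain ⟨xb, hxb⟩ := h (a * b) (by rw [pow_succ]; exact Ideal.mul_mem_mul ha hb)
          refine ⟨xb, hinj ?_⟩
          rw [map_smul, hfx', hfs, hxb, hcomm₂, ← mul_smul, mul_comm]
        obtain ⟨x'', hx''⟩ := hmtors (a • x₀) hcond ⟨a • y, hfx'⟩
        have : ϖ • (a • y - f x'') = 0 := by
          rw [smul_sub, ← hfx', hx'', hfs, sub_self]
        have := htf₂ _ this
        exact hno x'' (sub_eq_zero.mp this).symm
  have claimD : ∀ y : π₂, (∃ x : π₁, f x = ϖ • y) → ∃ x : π₁, f x = y := by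
    intro y hy
    obtain ⟨n, hn⟩ := hcoker y hy
    exact auxD n y hy hn
  have auxC : ∀ (N : ℕ) (y : π₂), (∃ x : π₁, f x = ϖ ^ N • y) → ∃ x : π₁, f x = y := by
    intro N
    induction N with
    | zero => intro y hy; simpa using hy
    | succ N ih =>
      intro y hy
      apply claimD
      apply ih (ϖ • y)
      obtain ⟨x, hx⟩ := hy
      exact ⟨x, by rw [hx, pow_succ, mul_smul]⟩
  intro y
  obtain ⟨N, x, hx⟩ := hBsur y
  exact auxC N y ⟨x, hx⟩
end

section
/- Let O be a discrete valuation ring with uniformizer ϖ, let A be a commutative local O-algebra with maximal ideal m, and let f : π₁ → π₂ be an A-linear map of A-modules. Assume that π₂ is O-torsion-free, that π₁ is ϖ-adically separated, that every element of (ker f)/ϖ(ker f) is annihilated by some power of m, and that the induced map (π₁/ϖπ₁)[m] → (π₂/ϖπ₂)[m] is injective. Then f is injective. -/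
/-- Injectivity half of the key lemma: let `O` be a DVR with uniformizer `ϖ`, `A` a
commutative local `O`-algebra with maximal ideal `m`, and `f : π₁ → π₂` an `A`-linear map.
If `π₂` is `O`-torsion-free, `π₁` is `ϖ`-adically separated, every element of
`(ker f)/ϖ(ker f)` is annihilated by a power of `m`, and the induced map
`(π₁/ϖπ₁)[m] → (π₂/ϖπ₂)[m]` is injective, then `f` is injective. -/
theorem statement1 {O : Type*} [CommRing O] [IsDomain O] [IsDiscreteValuationRing O]
    (ϖ : O) (hϖ : Irreducible ϖ)
    {A : Type*} [CommRing A] [Algebra O A] [IsLocalRing A]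
    {π₁ π₂ : Type*}
    [AddCommGroup π₁] [Module O π₁] [Module A π₁] [IsScalarTower O A π₁]
    [AddCommGroup π₂] [Module O π₂] [Module A π₂] [IsScalarTower O A π₂]
    (f : π₁ →ₗ[A] π₂)
    -- `π₂` is `O`-torsion-free
    (htf₂ : ∀ y : π₂, ϖ • y = 0 → y = 0)
    -- `π₁` is `ϖ`-adically separated
    (hsep₁ : ∀ x : π₁, (∀ n : ℕ, 1 ≤ n → ∃ y : π₁, x = ϖ ^ n • y) → x = 0)
    -- every element of `(ker f)/ϖ(ker f)` is annihilated by some power of `m`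
    (hker : ∀ x : π₁, f x = 0 →
      ∃ n : ℕ, ∀ a ∈ (IsLocalRing.maximalIdeal A) ^ n,
        ∃ z : π₁, f z = 0 ∧ a • x = ϖ • z)
    -- the induced map `(π₁/ϖπ₁)[m] → (π₂/ϖπ₂)[m]` is injective
    (hmtors : ∀ x : π₁, (∀ a ∈ IsLocalRing.maximalIdeal A, ∃ y : π₁, a • x = ϖ • y) →
      (∃ y : π₂, f x = ϖ • y) → ∃ y : π₁, x = ϖ • y) :
    Function.Injective f := by
  -- Key step: every element of the kernel is `ϖ` times an element of the kernel.
  have key : ∀ x : π₁, f x = 0 → ∃ z : π₁, f z = 0 ∧ x = ϖ • z := by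
    intro x hx
    obtain ⟨n, hn⟩ := hker x hx
    have main : ∀ k : ℕ, ∀ a ∈ (IsLocalRing.maximalIdeal A) ^ (n - k),
        ∃ z : π₁, f z = 0 ∧ a • x = ϖ • z := by
      intro k
      induction k with
      | zero => simpa using hn
      | succ k ih =>
        intro a ha
        have hfax : f (a • x) = 0 := by rw [map_smul, hx, smul_zero]
        obtain ⟨y, hy⟩ := hmtors (a • x)
          (by
            intro b hb
            obtain ⟨z, hz, hz'⟩ := ih (b * a)
              (by
                have h1 : b * a ∈ (IsLocalRing.maximalIdeal A) ^ (1 + (n - (k+1))) := by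
                  rw [pow_add, pow_one]; exact Ideal.mul_mem_mul hb ha
                exact Ideal.pow_le_pow_right (by omega) h1)
            exact ⟨z, by rw [smul_smul]; exact hz'⟩)
          ⟨0, by rw [hfax, smul_zero]⟩
        refine ⟨y, ?_, hy⟩
        have h2 : ϖ • f y = 0 := by rw [← f.map_smul_of_tower, ← hy, hfax]
        exact htf₂ _ h2
    obtain ⟨z, hz, hz'⟩ := main n 1 (by simp)
    exact ⟨z, hz, by simpa using hz'⟩
  -- Iterate: kernel elements are divisible by every power of `ϖ`.
  have iter : ∀ n : ℕ, ∀ x : π₁, f x = 0 → ∃ y : π₁, f y = 0 ∧ x = ϖ ^ n • y := by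
    intro n
    induction n with
    | zero => exact fun x hx => ⟨x, hx, by simp⟩
    | succ n ih =>
      intro x hx
      obtain ⟨y, hy, hy'⟩ := ih x hx
      obtain ⟨z, hz, hz'⟩ := key y hy
      exact ⟨z, hz, by rw [hy', hz', smul_smul, ← pow_succ]⟩
  have hzero : ∀ x : π₁, f x = 0 → x = 0 := by
    intro x hx
    refine hsep₁ x fun n _ => ?_
    obtain ⟨y, _, hy'⟩ := iter n x hx
    exact ⟨y, hy'⟩
  intro a b h
  have : f (a - b) = 0 := by rw [map_sub, h, sub_self]
  have := hzero _ this
  exact sub_eq_zero.mp this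
end

section
/- Let O be a discrete valuation ring with uniformizer ϖ and field of fractions E, let A be a commutative local O-algebra with maximal ideal m, and let f : π₁ → π₂ be an injective A-linear map of A-modules which are O-torsion-free. Assume that the induced map π₁ ⊗_O E → π₂ ⊗_O E is surjective, that every element of (coker f)[ϖ] is annihilated by some power of m, and that the induced map (π₁/ϖπ₁)[m] → (π₂/ϖπ₂)[m] is injective. Then f is surjective. -/
open TensorProduct in

/-- Surjectivity half of the key lemma: let `O` be a DVR with uniformizer `ϖ` and fraction
field `E`, `A` a commutative local `O`-algebra with maximal ideal `m`, and `f : π₁ → π₂` an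
injective `A`-linear map of `O`-torsion-free modules. If the induced map
`π₁ ⊗_O E → π₂ ⊗_O E` is surjective, every element of `(coker f)[ϖ]` is annihilated
by a power of `m`, and the induced map `(π₁/ϖπ₁)[m] → (π₂/ϖπ₂)[m]` is injective,
then `f` is surjective. -/
theorem statement2 {O : Type*} [CommRing O] [IsDomain O] [IsDiscreteValuationRing O]
    (ϖ : O) (hϖ : Irreducible ϖ)
    (E : Type*) [Field E] [Algebra O E] [IsFractionRing O E]
    {A : Type*} [CommRing A] [Algebra O A] [IsLocalRing A]
    {π₁ π₂ : Type*}
    [AddCommGroup π₁] [Module O π₁] [Module A π₁] [IsScalarTower O A π₁]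
    [AddCommGroup π₂] [Module O π₂] [Module A π₂] [IsScalarTower O A π₂]
    (f : π₁ →ₗ[A] π₂) (hf : Function.Injective f)
    -- `π₁` and `π₂` are `O`-torsion-free
    (htf₁ : ∀ x : π₁, ϖ • x = 0 → x = 0)
    (htf₂ : ∀ y : π₂, ϖ • y = 0 → y = 0)
    -- the induced map `π₁ ⊗_O E → π₂ ⊗_O E` is surjective
    (hE : Function.Surjective ((f.restrictScalars O).baseChange E))
    -- every element of `(coker f)[ϖ]` is annihilated by some power of `m`
    (hcoker : ∀ y : π₂, (∃ x : π₁, f x = ϖ • y) →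
      ∃ n : ℕ, ∀ a ∈ (IsLocalRing.maximalIdeal A) ^ n, ∃ x : π₁, f x = a • y)
    -- the induced map `(π₁/ϖπ₁)[m] → (π₂/ϖπ₂)[m]` is injective
    (hmtors : ∀ x : π₁, (∀ a ∈ IsLocalRing.maximalIdeal A, ∃ y : π₁, a • x = ϖ • y) →
      (∃ y : π₂, f x = ϖ • y) → ∃ y : π₁, x = ϖ • y) :
    Function.Surjective f := by
  classical
  set m := IsLocalRing.maximalIdeal A with hm
  -- f is O-linear
  have hOf : ∀ (r : O) (x : π₁), f (r • x) = r • f x := by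
    intro r x
    rw [← algebraMap_smul A r x, map_smul, algebraMap_smul]
  -- O and A scalars commute on π₂
  have hcomm₂ : ∀ (r : O) (a : A) (y : π₂), a • r • y = r • a • y := by
    intro r a y
    rw [← algebraMap_smul A r y, ← mul_smul, mul_comm, mul_smul, algebraMap_smul]
  -- π₂ is torsion-free for powers of ϖ
  have htfpow : ∀ (n : ℕ) (y : π₂), ϖ ^ n • y = 0 → y = 0 := by
    intro n
    induction n with
    | zero => intro y h; simpa using h
    | succ n ih =>
      intro y h
      rw [pow_succ, mul_smul] at h
      exact htf₂ y (ih _ h)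
  -- π₂ is torsion-free for all nonzero scalars
  have htfs : ∀ (s : O), s ≠ 0 → ∀ y : π₂, s • y = 0 → y = 0 := by
    intro s hs y h
    obtain ⟨n, u, rfl⟩ := IsDiscreteValuationRing.eq_unit_mul_pow_irreducible hs hϖ
    apply htfpow n
    have := congrArg (fun z => ((u⁻¹ : Oˣ) : O) • z) h
    simpa [← mul_smul, ← mul_assoc] using this
  -- the key induction on n
  have key : ∀ (n : ℕ) (y : π₂), (∃ x, f x = ϖ • y) →
      (∀ a ∈ m ^ n, ∃ x, f x = a • y) → ∃ x, f x = y := by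
    intro n
    induction n with
    | zero =>
      intro y _ h
      obtain ⟨x, hx⟩ := h 1 (by simp)
      exact ⟨x, by simpa using hx⟩
    | succ n ih =>
      intro y hϖy hmy
      obtain ⟨x, hx⟩ := hϖy
      have hay : ∀ a ∈ m, ∃ x', f x' = a • y := by
        intro a ha
        apply ih (a • y)
        · exact ⟨a • x, by rw [map_smul, hx, hcomm₂]⟩
        · intro b hb
          obtain ⟨x', hx'⟩ := hmy (b * a) (by rw [pow_succ]; exact Ideal.mul_mem_mul hb ha)
          exact ⟨x', by rw [hx', mul_smul]⟩
      have hxm : ∀ a ∈ m, ∃ z : π₁, a • x = ϖ • z := by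
        intro a ha
        obtain ⟨x', hx'⟩ := hay a ha
        refine ⟨x', hf ?_⟩
        rw [map_smul, hx, hcomm₂, ← hx', hOf]
      obtain ⟨z, hz⟩ := hmtors x hxm ⟨y, hx⟩
      refine ⟨z, ?_⟩
      have h0 : ϖ • (f z - y) = 0 := by
        rw [smul_sub, ← hOf, ← hz, hx, sub_self]
      have := htf₂ _ h0
      rw [sub_eq_zero] at this
      exact this
  -- descend along powers of ϖ
  have hdesc : ∀ (n : ℕ) (y : π₂), (∃ x, f x = ϖ ^ n • y) → ∃ x, f x = y := by
    intro n
    induction n with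
    | zero => intro y h; simpa using h
    | succ n ih =>
      intro y h
      have h' : ∃ x, f x = ϖ ^ n • (ϖ • y) := by
        obtain ⟨x, hx⟩ := h
        exact ⟨x, by rw [hx, pow_succ, mul_smul]⟩
      have hϖy : ∃ x, f x = ϖ • y := ih _ h'
      obtain ⟨n', hn'⟩ := hcoker y hϖy
      exact key n' y hϖy hn'
  -- clearing denominators in E ⊗ π₁
  have hden : ∀ t : E ⊗[O] π₁, ∃ (x : π₁) (s : O), s ≠ 0 ∧ s • t = (1 : E) ⊗ₜ[O] x := by
    intro t
    induction t with
    | zero => exact ⟨0, 1, one_ne_zero, by simp⟩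
    | tmul e x =>
      obtain ⟨r, s, hs, hrs⟩ := IsFractionRing.div_surjective (A := O) e
      have hs0 : (algebraMap O E) s ≠ 0 :=
        IsFractionRing.to_map_ne_zero_of_mem_nonZeroDivisors hs
      refine ⟨r • x, s, nonZeroDivisors.ne_zero hs, ?_⟩
      have h1 : s • e = algebraMap O E r := by
        rw [Algebra.smul_def, ← hrs]
        field_simp
      rw [TensorProduct.smul_tmul', h1, TensorProduct.tmul_smul,
        TensorProduct.smul_tmul', Algebra.smul_def, mul_one]
    | add t₁ t₂ ih₁ ih₂ =>
      obtain ⟨x₁, s₁, h₁, e₁⟩ := ih₁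
      obtain ⟨x₂, s₂, h₂, e₂⟩ := ih₂
      refine ⟨s₂ • x₁ + s₁ • x₂, s₁ * s₂, mul_ne_zero h₁ h₂, ?_⟩
      rw [smul_add, TensorProduct.tmul_add]
      congr 1
      · rw [mul_comm, mul_smul, e₁, TensorProduct.tmul_smul]
      · rw [mul_smul, e₂, TensorProduct.tmul_smul]
  -- injectivity of π₂ → E ⊗ π₂
  have hLM : IsLocalizedModule (nonZeroDivisors O) (TensorProduct.mk O E π₂ 1) :=
    (isLocalizedModule_iff_isBaseChange (nonZeroDivisors O) E _).mpr
      (TensorProduct.isBaseChange O π₂ E)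
  have hinj : ∀ z : π₂, (1 : E) ⊗ₜ[O] z = 0 → z = 0 := by
    intro z hz
    have : TensorProduct.mk O E π₂ 1 z = 0 := hz
    obtain ⟨s, hs⟩ := (IsLocalizedModule.eq_zero_iff (nonZeroDivisors O)
      (TensorProduct.mk O E π₂ 1)).mp this
    exact htfs s (nonZeroDivisors.ne_zero s.2) z hs
  -- main argument
  intro y
  obtain ⟨t, ht⟩ := hE ((1 : E) ⊗ₜ[O] y)
  obtain ⟨x, s, hs, hst⟩ := hden t
  have hfx : (1 : E) ⊗ₜ[O] (f x) = (1 : E) ⊗ₜ[O] (s • y) := by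
    have h1 : ((f.restrictScalars O).baseChange E) (s • t) = s • ((1 : E) ⊗ₜ[O] y) := by
      rw [LinearMap.map_smul_of_tower, ht]
    rw [hst] at h1
    simpa [TensorProduct.tmul_smul] using h1
  have hfx' : f x = s • y := by
    have : (1 : E) ⊗ₜ[O] (f x - s • y) = 0 := by
      rw [TensorProduct.tmul_sub, hfx, sub_self]
    have := hinj _ this
    rwa [sub_eq_zero] at this
  obtain ⟨n, u, rfl⟩ := IsDiscreteValuationRing.eq_unit_mul_pow_irreducible hs hϖ
  have : f (((u⁻¹ : Oˣ) : O) • x) = ϖ ^ n • y := by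
    rw [hOf, hfx', ← mul_smul, ← mul_assoc]
    simp
  exact hdesc n y ⟨_, this⟩
end
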